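/- Let X be a Fréchet space with seminorms (p_j) such that for every j ≥ 1, ker p_{j+1} has infinite codimension in ker p_j. Then for every j ≥ 1 and every closed subspace E ⊆ X of finite codimension, the seminorms p_j and p_{j+1} are not equivalent on E; in particular there exists x ∈ E with p_j(x) = 0 and p_{j+1}(x) > 0. -/

import Mathlib

/-- The kernel `{x | p x = 0}` of a seminorm, as a submodule. -/
def Seminorm.kerSubmodule {X : Type*} [AddCommGroup X] [Module ℝ X]
    (p : Seminorm ℝ X) : Submodule ℝ X where
  carrier := {x | p x = 0}
  zero_mem' := map_zero p
  add_mem' := by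
    intro a b ha hb
    simp only [Set.mem_setOf_eq] at ha hb ⊢
    refine le_antisymm ?_ (apply_nonneg p _)
    calc p (a + b) ≤ p a + p b := map_add_le_add p a b
      _ = 0 := by rw [ha, hb, add_zero]
  smul_mem' := by
    intro c x hx
    simp only [Set.mem_setOf_eq] at hx ⊢
    rw [map_smul_eq_mul, hx, mul_zero]

/-- If every `ker p_{j+1}` has infinite codimension in `ker p_j`,
then on every closed finite-codimensional subspace `E` the seminorms `p_j` and
`p_{j+1}` are not equivalent; in particular some `x ∈ E` has `p j x = 0` and
`p (j+1) x > 0`. -/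
theorem stmt_7 {X : Type*} [AddCommGroup X] [Module ℝ X] [UniformSpace X]
    [IsUniformAddGroup X] [CompleteSpace X] [ContinuousSMul ℝ X]
    (p : SeminormFamily ℝ X ℕ) (hp : WithSeminorms p)
    (hmono : Monotone p) (hsep : ∀ x : X, x ≠ 0 → ∃ j, p j x ≠ 0)
    (hcodim : ∀ j : ℕ, ¬ FiniteDimensional ℝ
      (↥((p j).kerSubmodule) ⧸
        ((p (j + 1)).kerSubmodule.comap ((p j).kerSubmodule).subtype))) :
    ∀ j : ℕ, ∀ E : Submodule ℝ X, IsClosed (E : Set X) →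
      FiniteDimensional ℝ (X ⧸ E) →
      (¬ ∃ C : ℝ, 0 < C ∧ ∀ x ∈ E, p (j + 1) x ≤ C * p j x) ∧
      ∃ x ∈ E, p j x = 0 ∧ 0 < p (j + 1) x := by
  intro j E hE hfin
  set K := (p j).kerSubmodule
  have key : ∃ x ∈ E, p j x = 0 ∧ 0 < p (j + 1) x := by
    by_contra h
    push_neg at h
    have hle : E.comap K.subtype ≤ (p (j + 1)).kerSubmodule.comap K.subtype := by
      rintro ⟨x, hx⟩ hxE
      have hx' : p j x = 0 := hx
      have := h x hxE hx'
      exact le_antisymm this (apply_nonneg _ _)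
    apply hcodim j
    -- K ⧸ (E.comap K.subtype) is finite dimensional
    have hfd : FiniteDimensional ℝ (K ⧸ E.comap K.subtype) := by
      let f : K →ₗ[ℝ] X ⧸ E := E.mkQ.comp K.subtype
      have hker : LinearMap.ker f = E.comap K.subtype := by
        rw [LinearMap.ker_comp, Submodule.ker_mkQ]
      have e := f.quotKerEquivRange
      rw [hker] at e
      exact Module.Finite.equiv e.symm
    -- the target is a quotient of that
    let g := Submodule.mapQ (E.comap K.subtype)
      ((p (j + 1)).kerSubmodule.comap K.subtype) LinearMap.id hle
    have hg : Function.Surjective g := by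
      intro y
      obtain ⟨x, rfl⟩ := Submodule.Quotient.mk_surjective _ y
      exact ⟨Submodule.Quotient.mk x, by simp [g, Submodule.mapQ_apply]⟩
    exact Module.Finite.of_surjective g hg
  exact ⟨by
    rintro ⟨C, hC, hbound⟩
    obtain ⟨x, hxE, hx0, hx1⟩ := key
    have := hbound x hxE
    rw [hx0, mul_zero] at this
    exact absurd (lt_of_lt_of_le hx1 this) (lt_irrefl 0), key⟩
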